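/- Let k ≥ 1 and consider signed-weighted lattice paths in the double staircase partition ρ̃_{2k+1}. Then wt((2k+1,1),(1,2k+1)) = C_k, wt((2k+1,2),(1,2k+1)) = 0, and wt((2k+1,2),(2,2k+1)) = −C_{k−1}. -/

import Mathlib

/-- `(i,j)` is a box of the Young diagram of `lam` (parts `lam 1, lam 2, …`, rows indexed
from the top, columns from the left): `1 ≤ i`, `1 ≤ j ≤ lam i`. -/
def inDiagram (lam : ℕ → ℕ) (p : ℕ × ℕ) : Prop :=
  1 ≤ p.1 ∧ 1 ≤ p.2 ∧ p.2 ≤ lam p.1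

/-- A step of a lattice path: up `(i,j) → (i-1,j)` or right `(i,j) → (i,j+1)`. -/
def isStep (p q : ℕ × ℕ) : Prop :=
  (p.1 = q.1 + 1 ∧ p.2 = q.2) ∨ (q.1 = p.1 ∧ q.2 = p.2 + 1)

/-- `P` is a lattice path in `lam` from box `a` to box `b`: a nonempty sequence of boxes of
`lam` starting at `a`, ending at `b`, each step going up or right. -/
def IsLatticePath (lam : ℕ → ℕ) (a b : ℕ × ℕ) (P : List (ℕ × ℕ)) : Prop :=
  P ≠ [] ∧ P.head? = some a ∧ P.getLast? = some b ∧
    (∀ q ∈ P, inDiagram lam q) ∧ List.Chain' isStep P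

/-- The signed weight of a path: the product of `(-1)^{i-1}` over all right steps taken from a
box in row `i` (up steps contribute `1`). -/
def pathWeight : List (ℕ × ℕ) → ℤ
  | [] => 1
  | [_] => 1
  | p :: q :: rest =>
      (if q.1 = p.1 then (-1 : ℤ) ^ (p.1 - 1) else 1) * pathWeight (q :: rest)

/-- `wt(a,b)`: the sum of the signed weights of all lattice paths in `lam` from `a` to `b`. -/
noncomputable def wtSum (lam : ℕ → ℕ) (a b : ℕ × ℕ) : ℤ :=
  ∑ᶠ P ∈ {P : List (ℕ × ℕ) | IsLatticePath lam a b P}, pathWeight P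

/-- The double staircase partition `ρ̃_n`: `(n,n,n-2,n-2,…,2,2)` for even `n` and
`(n,n,n-2,n-2,…,3,3,2)` for odd `n`, as a function sending a row index to its part. -/
def rhoTilde (n i : ℕ) : ℕ :=
  if 1 ≤ i ∧ i ≤ n then (if n % 2 = 1 ∧ i = n then 2 else n - 2 * ((i - 1) / 2)) else 0

/-- Balance: each step decreases `i` by one or increases `j` by one. -/
lemma path_balance : ∀ (P : List (ℕ × ℕ)) (a b : ℕ × ℕ), P.head? = some a →
    P.getLast? = some b → List.Chain' isStep P → a.1 + b.2 + 1 = b.1 + a.2 + P.length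
  | [], a, b => by simp
  | [x], a, b => by
      intro ha hb _
      simp only [List.head?_cons, Option.some.injEq] at ha
      simp only [List.getLast?_singleton, Option.some.injEq] at hb
      subst ha; subst hb; simp
  | x :: y :: rest, a, b => by
      intro ha hb hc
      simp only [List.head?_cons, Option.some.injEq] at ha
      subst ha
      rw [List.getLast?_cons_cons] at hb
      simp only [List.Chain', List.isChain_cons_cons] at hc
      have IH := path_balance (y :: rest) y b rfl hb hc.2
      have hst := hc.1
      simp only [List.length_cons] at IH ⊢
      rcases hst with ⟨h1, h2⟩ | ⟨h1, h2⟩ <;> omega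

def decode (a : ℕ × ℕ) : List Bool → List (ℕ × ℕ)
  | [] => [a]
  | d :: ds => a :: decode (if d then (a.1 - 1, a.2) else (a.1, a.2 + 1)) ds

lemma decode_surj : ∀ (P : List (ℕ × ℕ)) (a : ℕ × ℕ), P.head? = some a →
    List.Chain' isStep P → ∃ ds : List Bool, ds.length + 1 = P.length ∧ P = decode a ds
  | [], a => by simp
  | [x], a => by
      intro ha _
      simp only [List.head?_cons, Option.some.injEq] at ha
      subst ha
      exact ⟨[], by simp [decode]⟩
  | x :: y :: rest, a => by
      intro ha hc
      simp only [List.head?_cons, Option.some.injEq] at ha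
      subst ha
      simp only [List.Chain', List.isChain_cons_cons] at hc
      obtain ⟨ds, hlen, hP⟩ := decode_surj (y :: rest) y rfl hc.2
      rcases hc.1 with ⟨h1, h2⟩ | ⟨h1, h2⟩
      · refine ⟨true :: ds, by simp [← hlen], ?_⟩
        have hy : (x.1 - 1, x.2) = y := by
          have : x.1 - 1 = y.1 := by omega
          rw [Prod.ext_iff]; exact ⟨this, h2.symm ▸ rfl⟩
        have hd : decode x (true :: ds) = x :: decode (x.1 - 1, x.2) ds := by simp [decode]
        rw [hd, hy, ← hP]
      · refine ⟨false :: ds, by simp [← hlen], ?_⟩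
        have hy : (x.1, x.2 + 1) = y := by
          rw [Prod.ext_iff]; exact ⟨h1.symm, h2.symm⟩
        have hd : decode x (false :: ds) = x :: decode (x.1, x.2 + 1) ds := by simp [decode]
        rw [hd, hy, ← hP]

lemma paths_finite (lam : ℕ → ℕ) (a b : ℕ × ℕ) :
    {P : List (ℕ × ℕ) | IsLatticePath lam a b P}.Finite := by
  apply Set.Finite.subset
    (((List.finite_length_lt (α := Bool) (a.1 + b.2 + 1)).image (decode a)))
  intro P hP
  obtain ⟨hne, hh, hl, hmem, hch⟩ := hP
  obtain ⟨ds, hlen, hPd⟩ := decode_surj P a hh hch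
  have hbal := path_balance P a b hh hl hch
  exact ⟨ds, by simp only [Set.mem_setOf_eq]; omega, hPd.symm⟩

lemma wtSum_of_isEmpty (lam : ℕ → ℕ) (a b : ℕ × ℕ) (h : ∀ P, ¬ IsLatticePath lam a b P) :
    wtSum lam a b = 0 := by
  unfold wtSum
  have he : {P : List (ℕ × ℕ) | IsLatticePath lam a b P} = ∅ := by
    ext P; simp [h P]
  rw [he, finsum_mem_empty]

lemma wtSum_not_inDiagram (lam : ℕ → ℕ) (a b : ℕ × ℕ) (h : ¬ inDiagram lam a) :
    wtSum lam a b = 0 := by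
  apply wtSum_of_isEmpty
  rintro P ⟨hne, hh, _, hmem, _⟩
  exact h (hmem a (List.mem_of_mem_head? (Option.mem_def.mpr hh)))

lemma wtSum_no_path (lam : ℕ → ℕ) (a b : ℕ × ℕ) (hle : a.1 + b.2 ≤ b.1 + a.2) (hne : a ≠ b) :
    wtSum lam a b = 0 := by
  apply wtSum_of_isEmpty
  rintro P ⟨hne', hh, hl, hmem, hch⟩
  have hbal := path_balance P a b hh hl hch
  have hpos : 0 < P.length := List.length_pos_iff.mpr hne'
  have hlen : P.length = 1 := by omega
  obtain ⟨x, rfl⟩ := List.length_eq_one_iff.mp hlen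
  simp only [List.head?_cons, Option.some.injEq] at hh
  simp only [List.getLast?_singleton, Option.some.injEq] at hl
  subst hh
  exact hne hl

lemma wtSum_self (lam : ℕ → ℕ) (b : ℕ × ℕ) (hb : inDiagram lam b) : wtSum lam b b = 1 := by
  unfold wtSum
  have he : {P : List (ℕ × ℕ) | IsLatticePath lam b b P} = {[b]} := by
    ext P
    simp only [Set.mem_setOf_eq, Set.mem_singleton_iff]
    constructor
    · rintro ⟨hne', hh, hl, hmem, hch⟩
      have hbal := path_balance P b b hh hl hch
      have hpos : 0 < P.length := List.length_pos_iff.mpr hne'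
      have hlen : P.length = 1 := by omega
      obtain ⟨x, rfl⟩ := List.length_eq_one_iff.mp hlen
      simp only [List.head?_cons, Option.some.injEq] at hh
      rw [hh]
    · rintro rfl
      exact ⟨by simp, by simp, by simp, by simpa using hb, List.isChain_singleton _⟩
  rw [he, finsum_mem_singleton]
  rfl

lemma cons_injOn (a : ℕ × ℕ) (s : Set (List (ℕ × ℕ))) : Set.InjOn (List.cons a) s :=
  fun _ _ _ _ h => ((List.cons.injEq _ _ _ _).mp h).2

lemma wtSum_rec (lam : ℕ → ℕ) (i j : ℕ) (b : ℕ × ℕ) (ha : inDiagram lam (i, j))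
    (hne : (i, j) ≠ b) :
    wtSum lam (i, j) b =
      wtSum lam (i - 1, j) b + (-1 : ℤ) ^ (i - 1) * wtSum lam (i, j + 1) b := by
  have hi1 : 1 ≤ i := ha.1
  have hU := paths_finite lam (i - 1, j) b
  have hR := paths_finite lam (i, j + 1) b
  have hS : {P : List (ℕ × ℕ) | IsLatticePath lam (i, j) b P}
      = (List.cons (i, j)) '' {Q | IsLatticePath lam (i - 1, j) b Q}
        ∪ (List.cons (i, j)) '' {Q | IsLatticePath lam (i, j + 1) b Q} := by
    ext P
    simp only [Set.mem_setOf_eq, Set.mem_union, Set.mem_image]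
    constructor
    · rintro ⟨hne', hh, hl, hmem, hch⟩
      match P with
      | [] => exact absurd rfl hne'
      | [x] => 
        simp only [List.head?_cons, Option.some.injEq] at hh
        simp only [List.getLast?_singleton, Option.some.injEq] at hl
        exact absurd (hh ▸ hl) hne
      | x :: y :: Q' =>
        simp only [List.head?_cons, Option.some.injEq] at hh
        subst hh
        rw [List.getLast?_cons_cons] at hl
        simp only [List.Chain', List.isChain_cons_cons] at hch
        have hmem' : ∀ q ∈ y :: Q', inDiagram lam q :=
          fun q hq => hmem q (List.mem_cons_of_mem _ hq)
        rcases hch.1 with ⟨h1, h2⟩ | ⟨h1, h2⟩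
        · left
          have hy : y = (i - 1, j) := by
            rw [Prod.ext_iff]; simp only at h1 h2 ⊢; omega
          subst hy
          exact ⟨(i - 1, j) :: Q', ⟨List.cons_ne_nil _ _, rfl, hl, hmem', hch.2⟩, rfl⟩
        · right
          have hy : y = (i, j + 1) := by
            rw [Prod.ext_iff]; simp only at h1 h2 ⊢; omega
          subst hy
          exact ⟨(i, j + 1) :: Q', ⟨List.cons_ne_nil _ _, rfl, hl, hmem', hch.2⟩, rfl⟩
    · rintro (⟨Q, ⟨hQne, hQh, hQl, hQmem, hQch⟩, rfl⟩ | ⟨Q, ⟨hQne, hQh, hQl, hQmem, hQch⟩, rfl⟩)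
      · obtain ⟨y, Q', rfl⟩ := List.exists_cons_of_ne_nil hQne
        simp only [List.head?_cons, Option.some.injEq] at hQh
        subst hQh
        refine ⟨List.cons_ne_nil _ _, rfl, by rwa [List.getLast?_cons_cons], ?_, ?_⟩
        · intro q hq
          rcases List.mem_cons.mp hq with rfl | hq'
          · exact ha
          · exact hQmem q hq'
        · simp only [List.Chain', List.isChain_cons_cons]
          exact ⟨Or.inl ⟨by simp; omega, rfl⟩, hQch⟩
      · obtain ⟨y, Q', rfl⟩ := List.exists_cons_of_ne_nil hQne
        simp only [List.head?_cons, Option.some.injEq] at hQh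
        subst hQh
        refine ⟨List.cons_ne_nil _ _, rfl, by rwa [List.getLast?_cons_cons], ?_, ?_⟩
        · intro q hq
          rcases List.mem_cons.mp hq with rfl | hq'
          · exact ha
          · exact hQmem q hq'
        · simp only [List.Chain', List.isChain_cons_cons]
          exact ⟨Or.inr ⟨rfl, rfl⟩, hQch⟩
  have hdisj : Disjoint ((List.cons (i, j)) '' {Q | IsLatticePath lam (i - 1, j) b Q})
      ((List.cons (i, j)) '' {Q | IsLatticePath lam (i, j + 1) b Q}) := by
    rw [Set.disjoint_left]
    rintro P ⟨Q1, hQ1, rfl⟩ ⟨Q2, hQ2, hQe⟩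
    have hq : Q2 = Q1 := ((List.cons.injEq _ _ _ _).mp hQe).2
    subst hq
    have e1 := hQ1.2.1
    have e2 := hQ2.2.1
    rw [e1] at e2
    have : (i - 1, j) = (i, j + 1) := by exact Option.some.inj e2
    rw [Prod.ext_iff] at this
    simp only at this
    omega
  unfold wtSum
  rw [hS, finsum_mem_union hdisj (hU.image _) (hR.image _),
    finsum_mem_image (cons_injOn _ _), finsum_mem_image (cons_injOn _ _)]
  have haveU : ∑ᶠ Q ∈ {Q | IsLatticePath lam (i - 1, j) b Q}, pathWeight ((i, j) :: Q)
      = ∑ᶠ Q ∈ {Q | IsLatticePath lam (i - 1, j) b Q}, pathWeight Q := by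
    apply finsum_mem_congr rfl
    intro Q hQ
    obtain ⟨y, Q', rfl⟩ := List.exists_cons_of_ne_nil hQ.1
    have hy := hQ.2.1
    simp only [List.head?_cons, Option.some.injEq] at hy
    subst hy
    simp only [pathWeight]
    have hcond : (i - 1, j).1 ≠ (i, j).1 := by exact (by omega : i - 1 ≠ i)
    rw [if_neg hcond, one_mul]
  have haveR : ∑ᶠ Q ∈ {Q | IsLatticePath lam (i, j + 1) b Q}, pathWeight ((i, j) :: Q)
      = ∑ᶠ Q ∈ {Q | IsLatticePath lam (i, j + 1) b Q}, (-1 : ℤ) ^ (i - 1) * pathWeight Q := by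
    apply finsum_mem_congr rfl
    intro Q hQ
    obtain ⟨y, Q', rfl⟩ := List.exists_cons_of_ne_nil hQ.1
    have hy := hQ.2.1
    simp only [List.head?_cons, Option.some.injEq] at hy
    subst hy
    simp only [pathWeight]
    simp
  have haveR2 : ∑ᶠ Q ∈ {Q | IsLatticePath lam (i, j + 1) b Q}, (-1 : ℤ) ^ (i - 1) * pathWeight Q
      = (-1 : ℤ) ^ (i - 1) * ∑ᶠ Q ∈ {Q | IsLatticePath lam (i, j + 1) b Q}, pathWeight Q := by
    rw [finsum_mem_eq_finite_toFinset_sum _ hR, finsum_mem_eq_finite_toFinset_sum _ hR,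
      Finset.mul_sum]
  rw [haveU, haveR, haveR2]


/-- Ballot-type numbers: `T a m = C(a+m, m) - C(a+m, m-1)` (with the convention that the
second term is `0` when `m = 0`). -/
def bT (a m : ℕ) : ℤ :=
  ((a + m).choose m : ℤ) - (if m = 0 then 0 else ((a + m).choose (m - 1) : ℤ))

lemma bT_zero (a : ℕ) : bT a 0 = 1 := by simp [bT]

lemma bT_pascal (a m : ℕ) : bT (a + 1) (m + 1) = bT (a + 1) m + bT a (m + 1) := by
  rcases m with _ | m
  · simp [bT, Nat.choose_one_right]
    ring_nf
  · simp only [bT, if_neg (Nat.succ_ne_zero _), Nat.succ_sub_one]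
    have h1 : a + 1 + (m + 1 + 1) = (a + (m + 1 + 1)) + 1 := by ring
    have h2 : a + 1 + (m + 1) = (a + (m + 1)) + 1 := by ring
    have e1 : (a + (m+1+1) + 1).choose (m + 1 + 1) = (a + (m+1+1)).choose (m+1) + (a+(m+1+1)).choose (m+1+1) := Nat.choose_succ_succ _ _
    have e2 : (a + (m+1+1) + 1).choose (m + 1) = (a + (m+1+1)).choose m + (a+(m+1+1)).choose (m+1) := Nat.choose_succ_succ _ _
    have h3 : a + 1 + (m + 1) = a + (m + 1 + 1) := by ring
    rw [h1, e1, e2, h3]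
    push_cast
    ring

lemma bT_succ_self (m : ℕ) : bT m (m + 1) = 0 := by
  simp only [bT, if_neg (Nat.succ_ne_zero _), Nat.succ_sub_one]
  have : (m + (m+1)).choose (m + 1) = (m + (m+1)).choose m := by
    have := Nat.choose_symm (n := 2*m+1) (k := m) (by omega)
    have h2 : 2*m+1 - m = m + 1 := by omega
    rw [h2] at this
    have h3 : m + (m+1) = 2*m+1 := by ring
    rw [h3]
    exact this
  rw [this]; ring

lemma bT_catalan (k : ℕ) : bT k k = (catalan k : ℤ) := by
  rcases k with _ | k
  · simp [bT]
  · have hc : ((k+1) + 1 : ℤ) * (catalan (k+1) : ℤ) = ((k+1).centralBinom : ℤ) := by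
      exact_mod_cast congrArg (Nat.cast : ℕ → ℤ) (succ_mul_catalan_eq_centralBinom (k+1))
    have hcb : ((k+1).centralBinom : ℤ) = ((2*(k+1)).choose (k+1) : ℤ) := by
      norm_cast
    -- key: (k+2) * C(2k+2, k) = (k+1) * C(2k+2, k+1)
    have key : (2*(k+1)).choose (k + 1) * (k + 1) = (2*(k+1)).choose k * ((k+1) + 1) := by
      have := Nat.choose_succ_right_eq (2*(k+1)) k
      have h2 : 2*(k+1) - k = (k+1) + 1 := by omega
      rw [h2] at this
      exact this
    have hne : ((k:ℤ) + 1 + 1) ≠ 0 := by positivity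
    have expand : bT (k+1) (k+1) = ((2*(k+1)).choose (k+1) : ℤ) - ((2*(k+1)).choose k : ℤ) := by
      simp only [bT, if_neg (Nat.succ_ne_zero _), Nat.succ_sub_one]
      norm_num [two_mul]
    rw [expand]
    apply mul_left_cancel₀ hne
    rw [hcb] at hc
    have keyz : ((2*(k+1)).choose (k + 1) : ℤ) * ((k:ℤ) + 1) = ((2*(k+1)).choose k : ℤ) * ((k:ℤ) + 1 + 1) := by exact_mod_cast key
    linarith [keyz, hc]

/-- Values of the double staircase in range. -/
lemma rho_eq (k i : ℕ) (h1 : 1 ≤ i) (h2 : i ≤ 2 * k + 1) :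
    rhoTilde (2 * k + 1) i = if i = 2 * k + 1 then 2 else (2 * k + 1) - 2 * ((i - 1) / 2) := by
  unfold rhoTilde
  rw [if_pos ⟨h1, h2⟩]
  have hm : (2 * k + 1) % 2 = 1 := by omega
  by_cases hi : i = 2 * k + 1
  · rw [if_pos ⟨hm, hi⟩, if_pos hi]
  · rw [if_neg (fun h => hi h.2), if_neg hi]

lemma rho_out (k i : ℕ) (h : ¬(1 ≤ i ∧ i ≤ 2 * k + 1)) : rhoTilde (2 * k + 1) i = 0 := by
  unfold rhoTilde
  rw [if_neg h]

/-- The closed-form table for target `(1, 2k+1)`. -/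
def Ftab (k : ℕ) (p : ℕ × ℕ) : ℤ :=
  if p.1 % 2 = 0 ∧ p.2 % 2 = 0 then 0 else bT (k - p.2 / 2) ((p.1 - 1) / 2)

lemma Ftab_val (k i j : ℕ) (h : ¬(i % 2 = 0 ∧ j % 2 = 0)) :
    Ftab k (i, j) = bT (k - j / 2) ((i - 1) / 2) := by
  unfold Ftab
  rw [if_neg (by exact h)]

lemma Ftab_zero (k i j : ℕ) (h : i % 2 = 0 ∧ j % 2 = 0) : Ftab k (i, j) = 0 := by
  unfold Ftab
  rw [if_pos (by exact h)]

lemma bT_self_eq (m : ℕ) : bT (m + 1) (m + 1) = bT (m + 1) m := by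
  rw [bT_pascal, bT_succ_self, add_zero]

lemma main_F (k : ℕ) (hk : 1 ≤ k) :
    ∀ d : ℕ, ∀ i j : ℕ, inDiagram (rhoTilde (2 * k + 1)) (i, j) →
      i + (2 * k + 1) = 1 + j + d →
      wtSum (rhoTilde (2 * k + 1)) (i, j) (1, 2 * k + 1) = Ftab k (i, j) := by
  intro d
  induction d using Nat.strong_induction_on with
  | _ d IH =>
  intro i j hij hd
  obtain ⟨hi1, hj1, hjw⟩ := hij
  simp only at hi1 hj1 hjw
  have hin : i ≤ 2 * k + 1 := by
    by_contra hcon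
    rw [rho_out k i (by omega)] at hjw
    omega
  have hwi := rho_eq k i hi1 hin
  rcases Nat.eq_zero_or_pos d with hd0 | hdpos
  · -- d = 0 : the box must be the target (1, 2k+1)
    subst hd0
    have hi : i = 1 := by
      by_cases hn : i = 2 * k + 1 <;> rw [hwi] at hjw <;> simp [hn] at hjw <;> omega
    subst hi
    have hj : j = 2 * k + 1 := by omega
    subst hj
    rw [wtSum_self _ _ ⟨by norm_num, by norm_num, by rw [hwi]; rw [if_neg (by omega)]; omega⟩]
    rw [Ftab_val k _ _ (by omega)]
    have h1 : (2 * k + 1) / 2 = k := by omega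
    have h2 : (1 - 1) / 2 = 0 := by norm_num
    rw [h1, h2, Nat.sub_self, bT_zero]
  · -- d ≥ 1 : use the recurrence
    have hne' : (i, j) ≠ (1, 2 * k + 1) := by
      intro h
      rw [Prod.ext_iff] at h
      simp only at h
      omega
    rw [wtSum_rec _ i j _ ⟨hi1, hj1, hjw⟩ hne']
    -- the up neighbour
    have hup : wtSum (rhoTilde (2 * k + 1)) (i - 1, j) (1, 2 * k + 1)
        = if 2 ≤ i then Ftab k (i - 1, j) else 0 := by
      by_cases hi2 : 2 ≤ i
      · rw [if_pos hi2]
        have hwi' := rho_eq k (i - 1) (by omega) (by omega)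
        have hjle : j ≤ rhoTilde (2 * k + 1) (i - 1) := by
          rw [hwi']
          rw [hwi] at hjw
          by_cases hn : i = 2 * k + 1
          · rw [if_pos hn] at hjw
            rw [if_neg (by omega)]
            omega
          · rw [if_neg hn] at hjw
            rw [if_neg (by omega)]
            omega
        exact IH (d - 1) (by omega) (i - 1) j ⟨by omega, hj1, hjle⟩ (by omega)
      · rw [if_neg hi2]
        exact wtSum_not_inDiagram _ _ _ (fun h => by have := h.1; simp at this; omega)
    -- the right neighbour
    have hrt : wtSum (rhoTilde (2 * k + 1)) (i, j + 1) (1, 2 * k + 1)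
        = if j + 1 ≤ rhoTilde (2 * k + 1) i then Ftab k (i, j + 1) else 0 := by
      by_cases hj2 : j + 1 ≤ rhoTilde (2 * k + 1) i
      · rw [if_pos hj2]
        exact IH (d - 1) (by omega) i (j + 1) ⟨hi1, by omega, hj2⟩ (by omega)
      · rw [if_neg hj2]
        exact wtSum_not_inDiagram _ _ _ (fun h => by have := h.2.2; simp at this; omega)
    rw [hup, hrt]
    have hpw1 : i % 2 = 1 → (-1 : ℤ) ^ (i - 1) = 1 :=
      fun h => Even.neg_one_pow (Nat.even_iff.mpr (by omega))
    have hpw0 : i % 2 = 0 → (-1 : ℤ) ^ (i - 1) = -1 :=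
      fun h => Odd.neg_one_pow (Nat.odd_iff.mpr (by omega))
    by_cases hc1 : i = 1
    · subst hc1
      rw [if_neg (by omega)]
      have hwv : rhoTilde (2 * k + 1) 1 = 2 * k + 1 := by rw [hwi, if_neg (by omega)]; omega
      have hjn : j ≠ 2 * k + 1 := fun h => hne' (by rw [h])
      have hjv := hjw; rw [hwv] at hjv
      rw [if_pos (by rw [hwv]; omega)]
      rw [Ftab_val k 1 j (by omega), Ftab_val k 1 (j + 1) (by omega)]
      have h0 : (1 - 1) / 2 = 0 := rfl
      rw [h0, bT_zero, bT_zero]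
      norm_num
    · have hi2 : 2 ≤ i := by omega
      rw [if_pos hi2]
      by_cases hieven : i % 2 = 0
      · -- i even (hence i < 2k+1)
        have hw : rhoTilde (2 * k + 1) i = 2 * k + 1 - 2 * ((i - 1) / 2) := by
          rw [hwi, if_neg (by omega)]
        have hjv := hjw; rw [hw] at hjv
        rw [hpw0 hieven]
        by_cases hjeven : j % 2 = 0
        · rw [Ftab_zero _ _ _ ⟨hieven, hjeven⟩]
          rw [if_pos (by rw [hw]; omega)]
          rw [Ftab_val k (i - 1) j (by omega), Ftab_val k i (j + 1) (by omega)]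
          have e1 : (i - 1 - 1) / 2 = (i - 1) / 2 := by omega
          have e2 : (j + 1) / 2 = j / 2 := by omega
          rw [e1, e2]; ring
        · rw [Ftab_val k i j (by omega), Ftab_val k (i - 1) j (by omega)]
          have e1 : (i - 1 - 1) / 2 = (i - 1) / 2 := by omega
          rw [e1]
          have hz : (if j + 1 ≤ rhoTilde (2 * k + 1) i then Ftab k (i, j + 1) else 0) = 0 := by
            by_cases h : j + 1 ≤ rhoTilde (2 * k + 1) i
            · rw [if_pos h, Ftab_zero _ _ _ ⟨hieven, by omega⟩]
            · rw [if_neg h]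
          rw [hz]; ring
      · have hiodd : i % 2 = 1 := by omega
        rw [hpw1 hiodd]
        by_cases hjeven : j % 2 = 0
        · rw [Ftab_val k i j (by omega), Ftab_zero k (i - 1) j ⟨by omega, hjeven⟩]
          by_cases hn : i = 2 * k + 1
          · have hw2 : rhoTilde (2 * k + 1) i = 2 := by rw [hwi, if_pos hn]
            have hjv := hjw; rw [hw2] at hjv
            rw [if_neg (by rw [hw2]; omega)]
            have e1 : k - j / 2 = k - 1 := by omega
            have e2 : (i - 1) / 2 = k := by omega
            rw [e1, e2]
            obtain ⟨m, rfl⟩ : ∃ m, k = m + 1 := ⟨k - 1, by omega⟩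
            rw [Nat.add_sub_cancel, bT_succ_self]
            ring
          · have hw : rhoTilde (2 * k + 1) i = 2 * k + 1 - 2 * ((i - 1) / 2) := by
              rw [hwi, if_neg hn]
            have hjv := hjw; rw [hw] at hjv
            rw [if_pos (by rw [hw]; omega), Ftab_val k i (j + 1) (by omega)]
            have e2 : (j + 1) / 2 = j / 2 := by omega
            rw [e2]; ring
        · have hjodd : j % 2 = 1 := by omega
          rw [Ftab_val k i j (by omega), Ftab_val k (i - 1) j (by omega)]
          by_cases hp : j + 1 ≤ rhoTilde (2 * k + 1) i
          · rw [if_pos hp, Ftab_val k i (j + 1) (by omega)]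
            have hjk : j / 2 < k := by
              by_cases hn : i = 2 * k + 1
              · rw [hwi, if_pos hn] at hp; omega
              · rw [hwi, if_neg hn] at hp; omega
            obtain ⟨a, ha⟩ : ∃ a, k - j / 2 = a + 1 := ⟨k - j / 2 - 1, by omega⟩
            obtain ⟨m, hm⟩ : ∃ m, (i - 1) / 2 = m + 1 := ⟨(i - 1) / 2 - 1, by omega⟩
            have e1 : (i - 1 - 1) / 2 = m := by omega
            have e2 : k - (j + 1) / 2 = a := by omega
            rw [ha, hm, e1, e2, bT_pascal]; ring
          · rw [if_neg hp]
            have hn : i ≠ 2 * k + 1 := by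
              intro h
              have hjv := hjw; rw [hwi, if_pos h] at hjv
              rw [hwi, if_pos h] at hp
              omega
            have hjv := hjw; rw [hwi, if_neg hn] at hjv
            have hpv := hp; rw [hwi, if_neg hn] at hpv
            obtain ⟨m, hm⟩ : ∃ m, (i - 1) / 2 = m + 1 := ⟨(i - 1) / 2 - 1, by omega⟩
            have e0 : k - j / 2 = m + 1 := by omega
            have e1 : (i - 1 - 1) / 2 = m := by omega
            rw [e0, hm, e1, bT_self_eq]; ring

/-- The closed-form table for target `(2, 2k+1)`. -/
def Gtab (k : ℕ) (p : ℕ × ℕ) : ℤ :=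
  if p.1 = 1 then 0
  else if p.1 = 2 * k + 1 then
    (if p.2 = 1 then (catalan k : ℤ) - (catalan (k - 1) : ℤ) else -(catalan (k - 1) : ℤ))
  else if p.1 % 2 = 1 ∧ p.2 % 2 = 0 then 0
  else (-1 : ℤ) ^ (p.2 - 1) * bT (k - p.2 / 2) (p.1 / 2 - 1)

lemma Gtab_one (k j : ℕ) : Gtab k (1, j) = 0 := by
  unfold Gtab; rw [if_pos rfl]

lemma Gtab_last (k j : ℕ) (hk : 1 ≤ k) : Gtab k (2 * k + 1, j)
    = if j = 1 then (catalan k : ℤ) - (catalan (k - 1) : ℤ) else -(catalan (k - 1) : ℤ) := by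
  unfold Gtab
  rw [if_neg (by omega : ¬((2 * k + 1, j) : ℕ × ℕ).1 = 1), if_pos rfl]

lemma Gtab_zero_odd (k i j : ℕ) (h1 : i ≠ 1) (h2 : i ≠ 2 * k + 1)
    (h3 : i % 2 = 1 ∧ j % 2 = 0) : Gtab k (i, j) = 0 := by
  unfold Gtab
  rw [if_neg (by exact h1), if_neg (by exact h2), if_pos (by exact h3)]

lemma Gtab_val (k i j : ℕ) (h1 : i ≠ 1) (h2 : i ≠ 2 * k + 1)
    (h3 : ¬(i % 2 = 1 ∧ j % 2 = 0)) :
    Gtab k (i, j) = (-1 : ℤ) ^ (j - 1) * bT (k - j / 2) (i / 2 - 1) := by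
  unfold Gtab
  rw [if_neg (by exact h1), if_neg (by exact h2), if_neg (by exact h3)]

lemma main_G (k : ℕ) (hk : 1 ≤ k) :
    ∀ d : ℕ, ∀ i j : ℕ, inDiagram (rhoTilde (2 * k + 1)) (i, j) →
      i + (2 * k + 1) = 2 + j + d →
      wtSum (rhoTilde (2 * k + 1)) (i, j) (2, 2 * k + 1) = Gtab k (i, j) := by
  intro d
  induction d using Nat.strong_induction_on with
  | _ d IH =>
  intro i j hij hd
  obtain ⟨hi1, hj1, hjw⟩ := hij
  simp only at hi1 hj1 hjw
  have hin : i ≤ 2 * k + 1 := by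
    by_contra hcon
    rw [rho_out k i (by omega)] at hjw
    omega
  have hwi := rho_eq k i hi1 hin
  rcases Nat.eq_zero_or_pos d with hd0 | hdpos
  · -- d = 0 : box is (1, 2k) [no path] or (2, 2k+1) [the target]
    subst hd0
    have hi12 : i = 1 ∨ i = 2 := by
      by_cases hn : i = 2 * k + 1 <;> rw [hwi] at hjw <;> simp [hn] at hjw <;> omega
    rcases hi12 with rfl | rfl
    · have hj : j = 2 * k := by omega
      subst hj
      rw [wtSum_no_path _ _ _ (by simp; omega) (by simp), Gtab_one]
    · have hj : j = 2 * k + 1 := by omega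
      subst hj
      rw [wtSum_self _ _ ⟨by norm_num, by norm_num, by rw [hwi, if_neg (by omega)]; omega⟩]
      rw [Gtab_val k 2 (2 * k + 1) (by omega) (by omega) (by omega)]
      have h1 : (2 * k + 1) / 2 = k := by omega
      have h2 : (2 : ℕ) / 2 - 1 = 0 := by norm_num
      rw [h1, h2, Nat.sub_self, bT_zero,
        Even.neg_one_pow (Nat.even_iff.mpr (by omega)), mul_one]
  · -- d ≥ 1
    have hne' : (i, j) ≠ (2, 2 * k + 1) := by
      intro h
      rw [Prod.ext_iff] at h
      simp only at h
      omega
    rw [wtSum_rec _ i j _ ⟨hi1, hj1, hjw⟩ hne']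
    have hup : wtSum (rhoTilde (2 * k + 1)) (i - 1, j) (2, 2 * k + 1)
        = if 2 ≤ i then Gtab k (i - 1, j) else 0 := by
      by_cases hi2 : 2 ≤ i
      · rw [if_pos hi2]
        have hwi' := rho_eq k (i - 1) (by omega) (by omega)
        have hjle : j ≤ rhoTilde (2 * k + 1) (i - 1) := by
          rw [hwi']
          rw [hwi] at hjw
          by_cases hn : i = 2 * k + 1
          · rw [if_pos hn] at hjw
            rw [if_neg (by omega)]
            omega
          · rw [if_neg hn] at hjw
            rw [if_neg (by omega)]
            omega
        exact IH (d - 1) (by omega) (i - 1) j ⟨by omega, hj1, hjle⟩ (by omega)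
      · rw [if_neg hi2]
        exact wtSum_not_inDiagram _ _ _ (fun h => by have := h.1; simp at this; omega)
    have hrt : wtSum (rhoTilde (2 * k + 1)) (i, j + 1) (2, 2 * k + 1)
        = if j + 1 ≤ rhoTilde (2 * k + 1) i then Gtab k (i, j + 1) else 0 := by
      by_cases hj2 : j + 1 ≤ rhoTilde (2 * k + 1) i
      · rw [if_pos hj2]
        exact IH (d - 1) (by omega) i (j + 1) ⟨hi1, by omega, hj2⟩ (by omega)
      · rw [if_neg hj2]
        exact wtSum_not_inDiagram _ _ _ (fun h => by have := h.2.2; simp at this; omega)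
    rw [hup, hrt]
    have hpwi1 : i % 2 = 1 → (-1 : ℤ) ^ (i - 1) = 1 :=
      fun h => Even.neg_one_pow (Nat.even_iff.mpr (by omega))
    have hpwi0 : i % 2 = 0 → (-1 : ℤ) ^ (i - 1) = -1 :=
      fun h => Odd.neg_one_pow (Nat.odd_iff.mpr (by omega))
    have hpwj1 : j % 2 = 1 → (-1 : ℤ) ^ (j - 1) = 1 :=
      fun h => Even.neg_one_pow (Nat.even_iff.mpr (by omega))
    have hpwj0 : j % 2 = 0 → (-1 : ℤ) ^ (j - 1) = -1 :=
      fun h => Odd.neg_one_pow (Nat.odd_iff.mpr (by omega))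
    have hpj1 : j % 2 = 1 → (-1 : ℤ) ^ j = -1 :=
      fun h => Odd.neg_one_pow (Nat.odd_iff.mpr (by omega))
    have hpj0 : j % 2 = 0 → (-1 : ℤ) ^ j = 1 :=
      fun h => Even.neg_one_pow (Nat.even_iff.mpr (by omega))
    by_cases hc1 : i = 1
    · subst hc1
      rw [if_neg (by omega)]
      simp [Gtab_one]
    · by_cases hc2 : i = 2
      · subst hc2
        rw [if_pos (by omega), show (2 : ℕ) - 1 = 1 from rfl, Gtab_one]
        have hwv : rhoTilde (2 * k + 1) 2 = 2 * k + 1 := by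
          rw [hwi, if_neg (by omega)]; omega
        have hjn : j ≠ 2 * k + 1 := fun h => hne' (by rw [h])
        have hjv := hjw; rw [hwv] at hjv
        rw [if_pos (by rw [hwv]; omega)]
        rw [Gtab_val k 2 j (by omega) (by omega) (by omega),
            Gtab_val k 2 (j + 1) (by omega) (by omega) (by omega)]
        rw [show (2 : ℕ) / 2 - 1 = 0 from rfl, bT_zero, bT_zero]
        rw [show j + 1 - 1 = j from rfl]
        rw [hpwi0 (by omega)]
        rcases Nat.even_or_odd j with he | ho
        · rw [hpwj0 (Nat.even_iff.mp he), hpj0 (Nat.even_iff.mp he)]; ring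
        · rw [hpwj1 (Nat.odd_iff.mp ho), hpj1 (Nat.odd_iff.mp ho)]; ring
      · by_cases hc3 : i = 2 * k + 1
        · subst hc3
          have hwv : rhoTilde (2 * k + 1) (2 * k + 1) = 2 := by rw [hwi, if_pos rfl]
          have hjv := hjw; rw [hwv] at hjv
          rw [if_pos (by omega), show 2 * k + 1 - 1 = 2 * k from rfl]
          rw [Gtab_last k j hk]
          rw [Even.neg_one_pow (Nat.even_iff.mpr (by omega : (2 * k) % 2 = 0))]
          rcases (by omega : j = 1 ∨ j = 2) with rfl | rfl
          · rw [if_pos rfl]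
            rw [if_pos (by rw [hwv])]
            rw [Gtab_val k (2 * k) 1 (by omega) (by omega) (by omega)]
            rw [Gtab_last k 2 hk, if_neg (by omega)]
            rw [show (1 : ℕ) / 2 = 0 from rfl, Nat.sub_zero]
            have e2 : 2 * k / 2 - 1 = k - 1 := by omega
            rw [e2, show (1 : ℕ) - 1 = 0 from rfl, pow_zero, one_mul]
            obtain ⟨m, rfl⟩ : ∃ m, k = m + 1 := ⟨k - 1, by omega⟩
            rw [show m + 1 - 1 = m from rfl, ← bT_self_eq, bT_catalan]
            ring
          · rw [if_neg (show ¬(2 + 1 ≤ rhoTilde (2 * k + 1) (2 * k + 1)) by rw [hwv]; omega)]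
            rw [if_neg (show ¬(2 : ℕ) = 1 by omega)]
            rw [Gtab_val k (2 * k) 2 (by omega) (by omega) (by omega)]
            have e2 : 2 * k / 2 - 1 = k - 1 := by omega
            rw [show (2 : ℕ) / 2 = 1 from rfl, e2]
            rw [show (2 : ℕ) - 1 = 1 from rfl, pow_one]
            obtain ⟨m, rfl⟩ : ∃ m, k = m + 1 := ⟨k - 1, by omega⟩
            rw [show m + 1 - 1 = m from rfl, bT_catalan]
            ring
        · -- 3 ≤ i ≤ 2k
          have hi3 : 3 ≤ i := by omega
          have hin' : i ≤ 2 * k := by omega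
          have hw : rhoTilde (2 * k + 1) i = 2 * k + 1 - 2 * ((i - 1) / 2) := by
            rw [hwi, if_neg hc3]
          have hjv := hjw; rw [hw] at hjv
          rw [if_pos (by omega)]
          by_cases hieven : i % 2 = 0
          · rw [hpwi0 hieven]
            by_cases hjeven : j % 2 = 0
            · rw [Gtab_zero_odd k (i - 1) j (by omega) (by omega) ⟨by omega, hjeven⟩]
              rw [Gtab_val k i j (by omega) (by omega) (by omega)]
              rw [if_pos (by rw [hw]; omega)]
              rw [Gtab_val k i (j + 1) (by omega) (by omega) (by omega)]
              rw [show j + 1 - 1 = j from rfl]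
              have e2 : (j + 1) / 2 = j / 2 := by omega
              rw [e2, hpwj0 hjeven, hpj0 hjeven]
              ring
            · rw [Gtab_val k (i - 1) j (by omega) (by omega) (by omega)]
              rw [Gtab_val k i j (by omega) (by omega) (by omega)]
              rw [hpwj1 (by omega)]
              by_cases hp : j + 1 ≤ rhoTilde (2 * k + 1) i
              · rw [if_pos hp, Gtab_val k i (j + 1) (by omega) (by omega) (by omega)]
                rw [show j + 1 - 1 = j from rfl, hpj1 (by omega)]
                have hpv := hp; rw [hw] at hpv
                obtain ⟨a, ha⟩ : ∃ a, k - j / 2 = a + 1 := ⟨k - j / 2 - 1, by omega⟩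
                obtain ⟨m, hm⟩ : ∃ m, i / 2 - 1 = m + 1 := ⟨i / 2 - 2, by omega⟩
                have e1 : (i - 1) / 2 - 1 = m := by omega
                have e2 : k - (j + 1) / 2 = a := by omega
                rw [ha, hm, e1, e2, bT_pascal]; ring
              · rw [if_neg hp]
                have hpv := hp; rw [hw] at hpv
                obtain ⟨m, hm⟩ : ∃ m, i / 2 - 1 = m + 1 := ⟨i / 2 - 2, by omega⟩
                have e0 : k - j / 2 = m + 1 := by omega
                have e1 : (i - 1) / 2 - 1 = m := by omega
                rw [e0, hm, e1, bT_self_eq]; ring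
          · have hiodd : i % 2 = 1 := by omega
            rw [hpwi1 hiodd]
            by_cases hjeven : j % 2 = 0
            · rw [Gtab_zero_odd k i j (by omega) (by omega) ⟨hiodd, hjeven⟩]
              rw [Gtab_val k (i - 1) j (by omega) (by omega) (by omega)]
              rw [if_pos (by rw [hw]; omega), Gtab_val k i (j + 1) (by omega) (by omega) (by omega)]
              rw [show j + 1 - 1 = j from rfl, hpwj0 hjeven, hpj0 hjeven]
              have e1 : (i - 1) / 2 - 1 = i / 2 - 1 := by omega
              have e2 : (j + 1) / 2 = j / 2 := by omega
              rw [e1, e2]; ring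
            · rw [Gtab_val k i j (by omega) (by omega) (by omega)]
              rw [Gtab_val k (i - 1) j (by omega) (by omega) (by omega)]
              rw [hpwj1 (by omega)]
              have e1 : (i - 1) / 2 - 1 = i / 2 - 1 := by omega
              rw [e1]
              have hz : (if j + 1 ≤ rhoTilde (2 * k + 1) i then Gtab k (i, j + 1) else 0) = 0 := by
                by_cases h : j + 1 ≤ rhoTilde (2 * k + 1) i
                · rw [if_pos h, Gtab_zero_odd k i (j + 1) (by omega) (by omega) ⟨hiodd, by omega⟩]
                · rw [if_neg h]
              rw [hz]; ring


/-- In the double staircase partition `ρ̃_{2k+1}` (for `k ≥ 1`), the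
signed-weighted lattice path sums satisfy `wt((2k+1,1),(1,2k+1)) = C_k`,
`wt((2k+1,2),(1,2k+1)) = 0` and `wt((2k+1,2),(2,2k+1)) = -C_{k-1}`. -/
theorem stmt8 (k : ℕ) (hk : 1 ≤ k) :
    wtSum (rhoTilde (2 * k + 1)) (2 * k + 1, 1) (1, 2 * k + 1) = (catalan k : ℤ) ∧
    wtSum (rhoTilde (2 * k + 1)) (2 * k + 1, 2) (1, 2 * k + 1) = 0 ∧
    wtSum (rhoTilde (2 * k + 1)) (2 * k + 1, 2) (2, 2 * k + 1) = -(catalan (k - 1) : ℤ) := by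
  have hwlast : rhoTilde (2 * k + 1) (2 * k + 1) = 2 := by
    rw [rho_eq k (2 * k + 1) (by omega) le_rfl, if_pos rfl]
  refine ⟨?_, ?_, ?_⟩
  · rw [main_F k hk (4 * k) (2 * k + 1) 1 ⟨by omega, le_rfl, by rw [hwlast]; omega⟩ (by omega)]
    rw [Ftab_val k (2 * k + 1) 1 (by omega)]
    rw [show (1 : ℕ) / 2 = 0 from rfl, Nat.sub_zero,
      show (2 * k + 1 - 1) / 2 = k by omega, bT_catalan]
  · rw [main_F k hk (4 * k - 1) (2 * k + 1) 2 ⟨by omega, by omega, by rw [hwlast]⟩ (by omega)]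
    rw [Ftab_val k (2 * k + 1) 2 (by omega)]
    rw [show (2 : ℕ) / 2 = 1 from rfl, show (2 * k + 1 - 1) / 2 = k by omega]
    obtain ⟨m, rfl⟩ : ∃ m, k = m + 1 := ⟨k - 1, by omega⟩
    rw [show m + 1 - 1 = m from rfl, bT_succ_self]
  · rw [main_G k hk (4 * k - 2) (2 * k + 1) 2 ⟨by omega, by omega, by rw [hwlast]⟩ (by omega)]
    rw [Gtab_last k 2 hk, if_neg (by omega)]
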